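/- Let W be a Lagrangian subspace of a 2n₀-dimensional symplectic vector space V with compatible complex structure J, and P the orthogonal projection onto W. Then [P, J]² = Id, and hence the energy f(P) = ½ Tr([P, J]²) equals n₀. -/

import Mathlib

open RealInnerProductSpace

/-- The symplectic complement with respect to the form `ω u v = ⟪u, J v⟫`. -/
def sympComplE {E : Type*} [NormedAddCommGroup E] [InnerProductSpace ℝ E]
    (J : E →ₗ[ℝ] E) (W : Submodule ℝ E) : Submodule ℝ E where
  carrier := {v | ∀ w ∈ W, ⟪v, J w⟫ = 0}
  add_mem' := by
    intro a b ha hb w hw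
    simp only [Set.mem_setOf_eq] at ha hb
    simp [inner_add_left, ha w hw, hb w hw]
  zero_mem' := by intro w hw; simp
  smul_mem' := by
    intro c a ha w hw
    simp only [Set.mem_setOf_eq] at ha
    simp [real_inner_smul_left, ha w hw]

/-- The commutator of endomorphisms. -/
def ecomm {E : Type*} [AddCommGroup E] [Module ℝ E] (A B : Module.End ℝ E) :
    Module.End ℝ E := A * B - B * A

/-- For a Lagrangian subspace `W` of a `2n₀`-dimensional symplectic vector
space with compatible complex structure `J` and orthogonal projection `P` onto `W`, one
has `[P, J]² = Id`, hence the energy `f(P) = ½ Tr([P, J]²)` equals `n₀`. -/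
theorem lagrangian_energy {E : Type*} [NormedAddCommGroup E]
    [InnerProductSpace ℝ E] [FiniteDimensional ℝ E]
    (n₀ : ℕ) (hdim : Module.finrank ℝ E = 2 * n₀)
    (J : Module.End ℝ E)
    (hJ2 : ∀ v, J (J v) = -v)
    (hJskew : ∀ u v, ⟪J u, v⟫ = -⟪u, J v⟫)
    (W : Submodule ℝ E) (hLag : W = sympComplE J W)
    (P : Module.End ℝ E)
    (hP : ∀ v, P v = (Submodule.orthogonalProjection W v : E)) :
    ecomm P J * ecomm P J = 1 ∧
      (1 / 2 : ℝ) * LinearMap.trace ℝ E (ecomm P J * ecomm P J) = (n₀ : ℝ) := by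
  have hPmem : ∀ w ∈ W, P w = w := by
    intro w hw
    rw [hP]; exact (Submodule.starProjection_eq_self_iff (K := W)).2 hw
  have hPperp : ∀ v ∈ Wᗮ, P v = 0 := by
    intro v hv
    rw [hP, Submodule.orthogonalProjectionOnto_apply_of_mem_orthogonal hv,
      Submodule.coe_zero]
  have hJW : ∀ w ∈ W, J w ∈ Wᗮ := by
    intro w hw
    rw [Submodule.mem_orthogonal]
    intro u hu
    have hw' : w ∈ sympComplE J W := hLag ▸ hw
    have h := hw' u hu
    rw [real_inner_comm, hJskew, h, neg_zero]
  have hJWperp : ∀ v ∈ Wᗮ, J v ∈ W := by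
    intro v hv
    rw [hLag]
    show ∀ w ∈ W, ⟪J v, J w⟫ = 0
    intro w hw
    have h1 : ⟪J v, J w⟫ = -⟪v, J (J w)⟫ := hJskew v (J w)
    rw [h1, hJ2, inner_neg_right, neg_neg, real_inner_comm]
    exact hv w hw
  have hCW : ∀ w ∈ W, (ecomm P J) w = -J w := by
    intro w hw
    simp only [ecomm, LinearMap.sub_apply, Module.End.mul_apply]
    rw [hPmem w hw, hPperp (J w) (hJW w hw), zero_sub]
  have hCp : ∀ u ∈ Wᗮ, (ecomm P J) u = J u := by
    intro u hu
    simp only [ecomm, LinearMap.sub_apply, Module.End.mul_apply]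
    rw [hPperp u hu, hPmem (J u) (hJWperp u hu), map_zero, sub_zero]
  have key : ecomm P J * ecomm P J = 1 := by
    apply LinearMap.ext
    intro v
    set a : E := (Submodule.orthogonalProjection W v : E) with ha
    have haW : a ∈ W := (Submodule.orthogonalProjection W v).2
    have hbW : v - a ∈ Wᗮ := Submodule.sub_starProjection_mem_orthogonal (K := W) v
    have h1 : (ecomm P J) ((ecomm P J) a) = a := by
      rw [hCW a haW, map_neg, hCp (J a) (hJW a haW), hJ2, neg_neg]
    have h2 : (ecomm P J) ((ecomm P J) (v - a)) = v - a := by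
      rw [hCp (v - a) hbW, hCW (J (v - a)) (hJWperp (v - a) hbW), hJ2, neg_neg]
    have hv : v = a + (v - a) := by abel
    calc (ecomm P J * ecomm P J) v
        = (ecomm P J) ((ecomm P J) (a + (v - a))) := by rw [← hv]; rfl
      _ = (ecomm P J) ((ecomm P J) a) + (ecomm P J) ((ecomm P J) (v - a)) := by
          rw [map_add, map_add]
      _ = a + (v - a) := by rw [h1, h2]
      _ = v := by abel
  refine ⟨key, ?_⟩
  rw [key]
  have : LinearMap.trace ℝ E (1 : Module.End ℝ E) = (Module.finrank ℝ E : ℝ) := by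
    simp [LinearMap.trace_one]
  rw [this, hdim]
  push_cast
  ring
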